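/- (Five lemma for stability.) Let (A_m) → (B_m) → (C_m) → (D_m) → (E_m) be an exact sequence of level morphisms of inverse sequences of groups indexed by the natural numbers. If (A_m), (B_m), (D_m), and (E_m) are stable, then (C_m) is stable. -/

import Mathlib

universe v

/-- An inverse sequence of (not necessarily abelian) groups, indexed by the natural
numbers, is *stable* if it is pro-isomorphic to a rudimentary system, i.e. to a system
consisting of a single group `K`: there are morphisms of inverse sequences
`(G_m) → (K)` (given by `m₀` and `F`) and `(K) → (G_m)` (given by the compatible
family `u`) whose composites are equivalent to the respective identity morphisms. -/
def IsStableSequence (G : ℕ → Type v) [∀ m, Group (G m)]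
    (p : ∀ {m n : ℕ}, m ≤ n → (G n →* G m)) : Prop :=
  ∃ (K : GrpCat.{v}) (m₀ : ℕ) (F : G m₀ →* K) (u : ∀ m : ℕ, K →* G m),
    (∀ (m n : ℕ) (h : m ≤ n) (k : K), p h (u n k) = u m k) ∧
    (∀ k : K, F (u m₀ k) = k) ∧
    (∀ m : ℕ, ∃ (c : ℕ) (h1 : m ≤ c) (h2 : m₀ ≤ c),
      ∀ g : G c, u m (F (p h2 g)) = p h1 g)

theorem props_of_stable (G : ℕ → Type v) [∀ m, Group (G m)]
    (p : ∀ {m n : ℕ}, m ≤ n → (G n →* G m))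
    (hcomp : ∀ {m n k : ℕ} (h : m ≤ n) (h' : n ≤ k) (x : G k),
      p h (p h' x) = p (h.trans h') x)
    (h : IsStableSequence G (fun {m n} h => p h)) :
    ∃ (T : ℕ) (c : ℕ → ℕ),
      (∀ m, m ≤ c m) ∧
      (∀ (m k n : ℕ) (hmk : m ≤ k) (hkn : k ≤ n), c m ≤ k → ∀ g : G k,
        ∃ g' : G n, p (hmk.trans hkn) g' = p hmk g) ∧
      (∀ (m n : ℕ) (hTm : T ≤ m) (hmn : m ≤ n), c m ≤ n → ∀ g : G n,
        p (hTm.trans hmn) g = 1 → p hmn g = 1) := by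
  obtain ⟨K, m₀, F, u, hu, hFu, h3⟩ := h
  choose c hc1 hc2 hc3 using h3
  refine ⟨m₀, c, fun m => hc1 m, ?_, ?_⟩
  · intro m k n hmk hkn hck g
    have hm0k : m₀ ≤ k := (hc2 m).trans hck
    refine ⟨u n (F (p hm0k g)), ?_⟩
    have e1 : p (hmk.trans hkn) (u n (F (p hm0k g))) = u m (F (p hm0k g)) :=
      hu _ _ _ _
    have e2 : p hm0k g = p (hc2 m) (p hck g) := (hcomp (hc2 m) hck g).symm
    rw [e1, e2, hc3 m (p hck g)]
    exact hcomp (hc1 m) hck g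
  · intro m n hTm hmn hcn g hg
    have e1 : p hmn g = p (hc1 m) (p hcn g) := (hcomp (hc1 m) hcn g).symm
    rw [e1, ← hc3 m (p hcn g)]
    have e2 : p (hc2 m) (p hcn g) = p (hTm.trans hmn) g := hcomp (hc2 m) hcn g
    rw [e2, hg]
    simp

theorem stable_of_props (G : ℕ → Type v) [∀ m, Group (G m)]
    (p : ∀ {m n : ℕ}, m ≤ n → (G n →* G m))
    (hcomp : ∀ {m n k : ℕ} (h : m ≤ n) (h' : n ≤ k) (x : G k),
      p h (p h' x) = p (h.trans h') x)
    (T : ℕ) (c : ℕ → ℕ) (hc : ∀ m, m ≤ c m)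
    (hLift : ∀ (m k n : ℕ) (hmk : m ≤ k) (hkn : k ≤ n), c m ≤ k → ∀ g : G k,
        ∃ g' : G n, p (hmk.trans hkn) g' = p hmk g)
    (hKer : ∀ (m n : ℕ) (hTm : T ≤ m) (hmn : m ≤ n), c m ≤ n → ∀ g : G n,
        p (hTm.trans hmn) g = 1 → p hmn g = 1) :
    IsStableSequence G (fun {m n} h => p h) := by
  classical
  -- the candidate stable images
  set S : ∀ m : ℕ, Subgroup (G m) := fun m => (p (hc m)).range with hS
  have s1 : ∀ (m n : ℕ) (hmn : m ≤ n), c m ≤ n → ∀ g : G n, p hmn g ∈ S m := by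
    intro m n hmn hcn g
    exact ⟨p hcn g, hcomp (hc m) hcn g⟩
  have s1' : ∀ (m n : ℕ) (hmn : m ≤ n), c m ≤ n → ∀ x : G m, x ∈ S m →
      ∃ g : G n, p hmn g = x := by
    intro m n hmn hcn x hx
    obtain ⟨g₀, hg₀⟩ := hx
    obtain ⟨g', hg'⟩ := hLift m (c m) n (hc m) hcn le_rfl g₀
    exact ⟨g', by rw [← hg₀]; exact hg'⟩
  have s2 : ∀ (m n : ℕ) (hmn : m ≤ n) (x : G n), x ∈ S n → p hmn x ∈ S m := by
    intro m n hmn x hx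
    obtain ⟨g, hg⟩ := s1' n (max (c m) (c n)) (by have := hc n; omega)
      (by omega) x hx
    rw [← hg, hcomp]
    exact s1 m _ (by have := hc m; omega) (by omega) g
  have s4 : ∀ (m : ℕ) (hTm : T ≤ m) (x : G m), x ∈ S m → p hTm x = 1 → x = 1 := by
    intro m hTm x hx h1
    obtain ⟨g, hg⟩ := hx
    have h2 : p (hTm.trans (hc m)) g = 1 := by
      rw [← hcomp hTm (hc m) g, hg, h1]
    have := hKer m (c m) hTm (hc m) le_rfl g h2
    rw [← hg, this]
  -- the comparison homomorphisms to level T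
  have hψmem : ∀ (m : ℕ) (x : ↥(S (max m T))),
      p (le_max_right m T) (x : G (max m T)) ∈ S T :=
    fun m x => s2 T (max m T) (le_max_right m T) x x.2
  set ψ : ∀ m : ℕ, ↥(S (max m T)) →* ↥(S T) := fun m =>
    ((p (le_max_right m T)).comp (S (max m T)).subtype).codRestrict (S T) (hψmem m)
    with hψ
  have hψval : ∀ (m : ℕ) (x : ↥(S (max m T))),
      (ψ m x : G T) = p (le_max_right m T) (x : G (max m T)) := fun m x => rfl
  have hbij : ∀ m : ℕ, Function.Bijective (ψ m) := by
    intro m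
    constructor
    · intro a b hab
      have hv : p (le_max_right m T) (a : G (max m T)) =
          p (le_max_right m T) (b : G (max m T)) := congrArg Subtype.val hab
      have h1 : p (le_max_right m T) ((a : G (max m T)) * (b : G (max m T))⁻¹) = 1 := by
        rw [map_mul, map_inv, hv, mul_inv_cancel]
      have h2 := s4 (max m T) (le_max_right m T) _ (mul_mem a.2 (inv_mem b.2)) h1
      exact Subtype.ext (mul_inv_eq_one.mp h2)
    · intro k
      obtain ⟨g, hg⟩ := s1' T (max (c T) (c (max m T))) (by have := hc T; omega)
        (by omega) (k : G T) k.2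
      refine ⟨⟨p (by have := hc (max m T); omega) g,
        s1 (max m T) _ _ (by omega) g⟩, ?_⟩
      apply Subtype.ext
      rw [hψval, hcomp]
      exact hg
  set e : ∀ m : ℕ, ↥(S (max m T)) ≃* ↥(S T) := fun m =>
    MulEquiv.ofBijective (ψ m) (hbij m) with he
  have heval : ∀ (m : ℕ) (x : ↥(S (max m T))),
      ((e m x : ↥(S T)) : G T) = p (le_max_right m T) (x : G (max m T)) :=
    fun m x => rfl
  have hval : ∀ (m : ℕ) (k : ↥(S T)),
      p (le_max_right m T) (((e m).symm k : ↥(S (max m T))) : G (max m T)) = (k : G T) :=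
    fun m k => congrArg Subtype.val ((e m).apply_symm_apply k)
  have hsymm : ∀ (m : ℕ) (k : ↥(S T)) (x : ↥(S (max m T))),
      p (le_max_right m T) (x : G (max m T)) = (k : G T) → (e m).symm k = x := by
    intro m k x hx
    rw [MulEquiv.symm_apply_eq]
    exact (Subtype.ext hx).symm
  -- the data
  set u : ∀ m : ℕ, ↥(S T) →* G m := fun m =>
    ((p (le_max_left m T)).comp (S (max m T)).subtype).comp (e m).symm.toMonoidHom
    with hu
  have hu_val : ∀ (m : ℕ) (k : ↥(S T)),
      u m k = p (le_max_left m T) (((e m).symm k : ↥(S (max m T))) : G (max m T)) :=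
    fun m k => rfl
  have hFmem : ∀ g : G (c T), p (hc T) g ∈ S T := fun g => ⟨g, rfl⟩
  set F : G (c T) →* ↥(S T) := (p (hc T)).codRestrict (S T) hFmem with hF
  have main1 : ∀ (m n : ℕ) (hmn : m ≤ n) (k : ↥(S T)), p hmn (u n k) = u m k := by
    intro m n hmn k
    have hmn' : max m T ≤ max n T := by omega
    have hmem : p hmn' (((e n).symm k : ↥(S (max n T))) : G (max n T)) ∈ S (max m T) :=
      s2 _ _ hmn' _ ((e n).symm k).2
    have e2 : (e m).symm k = ⟨_, hmem⟩ := by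
      apply hsymm
      show p (le_max_right m T) (p hmn' _) = _
      rw [hcomp]
      exact hval n k
    rw [hu_val, hu_val, e2]
    show p hmn (p (le_max_left n T) _) = p (le_max_left m T) (p hmn' _)
    rw [hcomp, hcomp]
  have main2 : ∀ k : ↥(S T), F (u (c T) k) = k := by
    intro k
    apply Subtype.ext
    show p (hc T) (u (c T) k) = (k : G T)
    rw [hu_val, hcomp]
    exact hval (c T) k
  have main3 : ∀ m : ℕ, ∃ (c' : ℕ) (h1 : m ≤ c') (h2 : c T ≤ c'),
      ∀ g : G c', u m (F (p h2 g)) = p h1 g := by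
    intro m
    set c' := max (c (max m T)) (c T) with hc'
    refine ⟨c', by have := hc (max m T); omega, by omega, ?_⟩
    intro g
    have hmem : p (show max m T ≤ c' by have := hc (max m T); omega) g ∈ S (max m T) :=
      s1 (max m T) c' _ (by omega) g
    have e2 : (e m).symm (F (p (by omega : c T ≤ c') g)) = ⟨_, hmem⟩ := by
      apply hsymm
      show p (le_max_right m T) (p _ g) = p (hc T) (p (by omega : c T ≤ c') g)
      rw [hcomp, hcomp]
    rw [hu_val, e2]
    show p (le_max_left m T) (p _ g) = _
    rw [hcomp]
  exact ⟨GrpCat.of ↥(S T), c T, F, u, fun m n h k => main1 m n h k,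
    fun k => main2 k, fun m => main3 m⟩

/-- Dydak's five lemma for stability: given an exact sequence of level morphisms of
inverse sequences of groups `(A_m) → (B_m) → (C_m) → (D_m) → (E_m)` in which
`(A_m)`, `(B_m)`, `(D_m)`, and `(E_m)` are stable, the middle sequence `(C_m)` is
stable. -/
theorem five_lemma_for_stability
    (A B C D E : ℕ → Type v)
    [∀ m, Group (A m)] [∀ m, Group (B m)] [∀ m, Group (C m)]
    [∀ m, Group (D m)] [∀ m, Group (E m)]
    (pA : ∀ {m n : ℕ}, m ≤ n → (A n →* A m))
    (pB : ∀ {m n : ℕ}, m ≤ n → (B n →* B m))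
    (pC : ∀ {m n : ℕ}, m ≤ n → (C n →* C m))
    (pD : ∀ {m n : ℕ}, m ≤ n → (D n →* D m))
    (pE : ∀ {m n : ℕ}, m ≤ n → (E n →* E m))
    (hA_id : ∀ (m : ℕ) (x : A m), pA (le_refl m) x = x)
    (hA_comp : ∀ {m n k : ℕ} (h : m ≤ n) (h' : n ≤ k) (x : A k),
      pA h (pA h' x) = pA (h.trans h') x)
    (hB_id : ∀ (m : ℕ) (x : B m), pB (le_refl m) x = x)
    (hB_comp : ∀ {m n k : ℕ} (h : m ≤ n) (h' : n ≤ k) (x : B k),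
      pB h (pB h' x) = pB (h.trans h') x)
    (hC_id : ∀ (m : ℕ) (x : C m), pC (le_refl m) x = x)
    (hC_comp : ∀ {m n k : ℕ} (h : m ≤ n) (h' : n ≤ k) (x : C k),
      pC h (pC h' x) = pC (h.trans h') x)
    (hD_id : ∀ (m : ℕ) (x : D m), pD (le_refl m) x = x)
    (hD_comp : ∀ {m n k : ℕ} (h : m ≤ n) (h' : n ≤ k) (x : D k),
      pD h (pD h' x) = pD (h.trans h') x)
    (hE_id : ∀ (m : ℕ) (x : E m), pE (le_refl m) x = x)
    (hE_comp : ∀ {m n k : ℕ} (h : m ≤ n) (h' : n ≤ k) (x : E k),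
      pE h (pE h' x) = pE (h.trans h') x)
    -- the level morphisms
    (f1 : ∀ m, A m →* B m) (f2 : ∀ m, B m →* C m)
    (f3 : ∀ m, C m →* D m) (f4 : ∀ m, D m →* E m)
    (hf1 : ∀ (m n : ℕ) (h : m ≤ n) (x : A n), f1 m (pA h x) = pB h (f1 n x))
    (hf2 : ∀ (m n : ℕ) (h : m ≤ n) (x : B n), f2 m (pB h x) = pC h (f2 n x))
    (hf3 : ∀ (m n : ℕ) (h : m ≤ n) (x : C n), f3 m (pC h x) = pD h (f3 n x))
    (hf4 : ∀ (m n : ℕ) (h : m ≤ n) (x : D n), f4 m (pD h x) = pE h (f4 n x))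
    -- exactness at `B`, `C`, and `D` for each fixed index `m`
    (hexactB : ∀ (m : ℕ) (y : B m), f2 m y = 1 ↔ ∃ x : A m, f1 m x = y)
    (hexactC : ∀ (m : ℕ) (y : C m), f3 m y = 1 ↔ ∃ x : B m, f2 m x = y)
    (hexactD : ∀ (m : ℕ) (y : D m), f4 m y = 1 ↔ ∃ x : C m, f3 m x = y)
    -- stability of the four outer sequences
    (hA : IsStableSequence A (fun {m n} h => pA h))
    (hB : IsStableSequence B (fun {m n} h => pB h))
    (hD : IsStableSequence D (fun {m n} h => pD h))
    (hE : IsStableSequence E (fun {m n} h => pE h)) :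
    IsStableSequence C (fun {m n} h => pC h) := by
  obtain ⟨a₀, cA, hcA, liftA, kerA⟩ := props_of_stable A pA hA_comp hA
  obtain ⟨b₀, cB, hcB, liftB, kerB⟩ := props_of_stable B pB hB_comp hB
  obtain ⟨d₀, cD, hcD, liftD, kerD⟩ := props_of_stable D pD hD_comp hD
  obtain ⟨e₀, cE, hcE, liftE, kerE⟩ := props_of_stable E pE hE_comp hE
  -- Step 1: the Mittag-Leffler (lifting) property for `C`.
  have liftC : ∀ m : ℕ, ∃ (cm : ℕ) (hmc : m ≤ cm),
      ∀ (k n : ℕ) (hk : cm ≤ k) (hkn : k ≤ n) (z : C k),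
        ∃ z' : C n, pC ((hmc.trans hk).trans hkn) z' = pC (hmc.trans hk) z := by
    intro m
    refine ⟨cD (e₀ + cB m + m) + (e₀ + cB m + m), by omega, ?_⟩
    intro k n hk hkn z
    set t := e₀ + cB m + m with ht
    set n' := n + e₀ with hn'
    set N := cE n' + n' + k with hN
    obtain ⟨w, hw⟩ := liftD t k N (by omega) (by omega) (by omega) (f3 k z)
    have h2 : pE (show t ≤ N by omega) (f4 N w) = 1 := by
      rw [← hf4 t N (by omega) w, hw, ← hf3 t k (by omega) z]
      exact (hexactD t _).mpr ⟨pC (show t ≤ k by omega) z, rfl⟩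
    have h3 : pE (show e₀ ≤ N by omega) (f4 N w) = 1 := by
      rw [← hE_comp (show e₀ ≤ t by omega) (show t ≤ N by omega) (f4 N w), h2, map_one]
    have h4 : pE (show n' ≤ N by omega) (f4 N w) = 1 :=
      kerE n' N (by omega) (by omega) (by omega) _ h3
    have h5 : f4 n' (pD (show n' ≤ N by omega) w) = 1 := by
      rw [hf4 n' N (by omega) w]; exact h4
    obtain ⟨zh, hzh⟩ := (hexactD n' _).mp h5
    have h6 : f3 t (pC (show t ≤ n' by omega) zh) = f3 t (pC (show t ≤ k by omega) z) := by
      rw [hf3 t n' (by omega) zh, hzh, hD_comp, hw, ← hf3 t k (by omega) z]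
    have h7 : f3 t (pC (show t ≤ n' by omega) zh * (pC (show t ≤ k by omega) z)⁻¹) = 1 := by
      rw [map_mul, map_inv, h6, mul_inv_cancel]
    obtain ⟨y, hy⟩ := (hexactC t _).mp h7
    obtain ⟨y', hy'⟩ := liftB m t n' (by omega) (by omega) (by omega) y
    refine ⟨pC (show n ≤ n' by omega) ((f2 n' y')⁻¹ * zh), ?_⟩
    rw [hC_comp, map_mul, map_inv, ← hf2 m n' (by omega) y', hy',
      hf2 m t (by omega) y, hy, map_mul, map_inv, hC_comp, hC_comp,
      mul_inv_rev, inv_inv, mul_assoc, inv_mul_cancel, mul_one]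
  choose cC hcC1 hcC2 using liftC
  -- Step 2: eventual injectivity on stable images for `C`.
  set T := cA b₀ + b₀ + d₀ with hT
  have injC : ∀ (n : ℕ) (hTn : T ≤ n) (x : C n),
      (∀ (M : ℕ) (hnM : n ≤ M), ∃ ξ : C M, pC hnM ξ = x) →
      pC hTn x = 1 → x = 1 := by
    intro n hTn x hx hx1
    set N := n + cB n + cA b₀ with hN2
    set M := N + cD N with hM
    obtain ⟨ξ, hξ⟩ := hx M (by omega)
    have hξn : pC (show n ≤ M by omega) ξ = x := hξ
    have hTM : pC (show T ≤ M by omega) ξ = 1 := by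
      rw [← hC_comp hTn (show n ≤ M by omega) ξ, hξn]; exact hx1
    have hdM : pC (show d₀ ≤ M by omega) ξ = 1 := by
      rw [← hC_comp (show d₀ ≤ T by omega) (show T ≤ M by omega) ξ, hTM, map_one]
    have h1 : pD (show d₀ ≤ M by omega) (f3 M ξ) = 1 := by
      rw [← hf3 d₀ M (by omega) ξ, hdM, map_one]
    have h2 : f3 N (pC (show N ≤ M by omega) ξ) = 1 := by
      rw [hf3 N M (by omega) ξ]
      exact kerD N M (by omega) (by omega) (by omega) _ h1
    obtain ⟨y, hy⟩ := (hexactC N _).mp h2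
    have h3 : f2 T (pB (show T ≤ N by omega) y) = 1 := by
      rw [hf2 T N (by omega) y, hy, hC_comp]; exact hTM
    obtain ⟨a, ha⟩ := (hexactB T _).mp h3
    obtain ⟨j, hj⟩ := liftA b₀ T N (by omega) (by omega) (by omega) a
    have e1 : pB (show b₀ ≤ N by omega) y = f1 b₀ (pA (show b₀ ≤ T by omega) a) := by
      rw [← hB_comp (show b₀ ≤ T by omega) (show T ≤ N by omega) y, ← ha,
        hf1 b₀ T (by omega) a]
    have e2 : pB (show b₀ ≤ N by omega) (f1 N j) =
        f1 b₀ (pA (show b₀ ≤ T by omega) a) := by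
      rw [← hf1 b₀ N (by omega) j, hj]
    have h4 : pB (show b₀ ≤ N by omega) (y * (f1 N j)⁻¹) = 1 := by
      rw [map_mul, map_inv, e1, e2, mul_inv_cancel]
    have h5 : pB (show n ≤ N by omega) (y * (f1 N j)⁻¹) = 1 :=
      kerB n N (by omega) (by omega) (by omega) _ h4
    have h6 : pB (show n ≤ N by omega) y = f1 n (pA (show n ≤ N by omega) j) := by
      rw [map_mul, map_inv] at h5
      have h5' := mul_inv_eq_one.mp h5
      rw [h5', ← hf1 n N (by omega) j]
    calc x = pC (show n ≤ N by omega) (pC (show N ≤ M by omega) ξ) := by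
            rw [hC_comp]; exact hξn.symm
      _ = pC (show n ≤ N by omega) (f2 N y) := by rw [hy]
      _ = f2 n (pB (show n ≤ N by omega) y) := (hf2 n N (by omega) y).symm
      _ = f2 n (f1 n (pA (show n ≤ N by omega) j)) := by rw [h6]
      _ = 1 := (hexactB n _).mpr ⟨_, rfl⟩
  -- Step 3: the kernel property for `C`.
  have kerC : ∀ (m n : ℕ) (hTm : T ≤ m) (hmn : m ≤ n), cC m + m ≤ n → ∀ z : C n,
      pC (hTm.trans hmn) z = 1 → pC hmn z = 1 := by
    intro m n hmn hTm hcn z hz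
    apply injC m hmn (pC hTm z) ?_ ?_
    · intro M hmM
      rcases le_or_gt M n with hMn | hnM
      · exact ⟨pC hMn z, by rw [hC_comp]⟩
      · obtain ⟨z', hz'⟩ := hcC2 m n M (by omega) (by omega) z
        exact ⟨z', hz'⟩
    · rw [hC_comp]; exact hz
  exact stable_of_props C pC hC_comp T (fun m => cC m + m)
    (fun m => by show m ≤ cC m + m; have := hcC1 m; omega)
    (fun m k n hmk hkn hck g => by
      have hck' : cC m + m ≤ k := hck
      obtain ⟨z', hz'⟩ := hcC2 m k n (by omega) hkn g
      exact ⟨z', hz'⟩)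
    (fun m n hTm hmn hcn g hg => by
      have hcn' : cC m + m ≤ n := hcn
      exact kerC m n hTm hmn (by omega) g hg)
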